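/- Let A = [a_ij] and X = [x_ij] be n×n real symmetric positive semidefinite matrices. Then (a_11 a_22 ⋯ a_nn) · det(X) ≤ det(A ∘ X) ≤ (a_11 a_22 ⋯ a_nn) · (x_11 x_22 ⋯ x_nn), where A ∘ X is the Hadamard product. -/

import Mathlib

open Matrix

open scoped MatrixOrder

namespace OppenheimAux

variable {m : Type*} [Fintype m] [DecidableEq m]

/-- Schur product theorem over ℝ. -/
theorem hadamard_posSemidef {A X : Matrix m m ℝ} (hA : A.PosSemidef) (hX : X.PosSemidef) :
    (A ⊙ X).PosSemidef := by
  obtain ⟨B, hB⟩ := CStarAlgebra.nonneg_iff_eq_star_mul_self.mp hA.nonneg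
  refine posSemidef_iff_dotProduct_mulVec.mpr ⟨?_, ?_⟩
  · ext i j
    simp only [conjTranspose_apply, hadamard_apply, star_trivial]
    rw [← hA.1.apply i j, ← hX.1.apply i j, star_trivial, star_trivial]
  · intro x
    have key : dotProduct (star x) ((A ⊙ X) *ᵥ x)
        = ∑ k, dotProduct (star (fun i => B k i * x i)) (X *ᵥ (fun i => B k i * x i)) := by
      simp only [dotProduct, mulVec, hadamard_apply, hB, Matrix.mul_apply,
        conjTranspose_apply, star_trivial, Finset.mul_sum, Finset.sum_mul, star_eq_conjTranspose]
      refine Eq.trans (Finset.sum_congr rfl fun i _ => Finset.sum_comm) ?_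
      refine Eq.trans Finset.sum_comm ?_
      exact Finset.sum_congr rfl fun k _ => Finset.sum_congr rfl fun i _ =>
        Finset.sum_congr rfl fun j _ => by ring
    rw [key]
    exact Finset.sum_nonneg fun k _ => hX.dotProduct_mulVec_nonneg _

theorem psd_det_nonneg {M : Matrix m m ℝ} (h : M.PosSemidef) : 0 ≤ M.det := by
  rw [h.1.det_eq_prod_eigenvalues]
  exact Finset.prod_nonneg fun i _ => by simpa using h.eigenvalues_nonneg i

theorem psd_diag_nonneg {M : Matrix m m ℝ} (h : M.PosSemidef) (i : m) : 0 ≤ M i i := by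
  have := h.dotProduct_mulVec_nonneg (Pi.single i 1)
  simpa [dotProduct, mulVec, Pi.single_apply, Finset.mul_sum] using this

theorem pd_diag_pos {M : Matrix m m ℝ} (h : M.PosDef) (i : m) : 0 < M i i := by
  have hne : (Pi.single i 1 : m → ℝ) ≠ 0 := fun hcon => by
    have := congrFun hcon i
    rw [Pi.single_eq_same] at this
    exact one_ne_zero this
  have := h.dotProduct_mulVec_pos hne
  simpa [dotProduct, mulVec, Pi.single_apply, Finset.mul_sum] using this

theorem posDef_of_psd_det_ne_zero {M : Matrix m m ℝ} (h : M.PosSemidef) (hd : M.det ≠ 0) :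
    M.PosDef := by
  refine PosDef.of_dotProduct_mulVec_pos h.1 fun x hx => (h.dotProduct_mulVec_nonneg x).lt_of_ne fun hEq => hx ?_
  have h0 : M *ᵥ x = 0 := (h.dotProduct_mulVec_zero_iff x).mp hEq.symm
  have hinj : Function.Injective (M.mulVec) :=
    mulVec_injective_iff_isUnit.mpr ((isUnit_iff_isUnit_det M).mpr hd.isUnit)
  have : M *ᵥ x = M *ᵥ 0 := by simpa using h0
  exact hinj this

theorem one_le_det_one_add {Q : Matrix m m ℝ} (hQ : Q.PosSemidef) : 1 ≤ (1 + Q).det := by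
  have hH := hQ.1
  set U : Matrix m m ℝ := (hH.eigenvectorUnitary : Matrix m m ℝ)
  have hU : U * star U = 1 := mem_unitaryGroup_iff.mp hH.eigenvectorUnitary.2
  have hQ' : Q = U * diagonal (RCLike.ofReal ∘ hH.eigenvalues) * star U := hH.spectral_theorem
  have key : 1 + Q = U * diagonal (fun i => 1 + hH.eigenvalues i) * star U := by
    have : (diagonal (fun i => 1 + hH.eigenvalues i) : Matrix m m ℝ)
        = 1 + diagonal (RCLike.ofReal ∘ hH.eigenvalues) := by
      rw [← diagonal_one, diagonal_add]
      congr 1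
    rw [this, Matrix.mul_add, Matrix.add_mul, Matrix.mul_one, hU, ← hQ']
  have hU2 : star U * U = 1 := mem_unitaryGroup_iff'.mp hH.eigenvectorUnitary.2
  rw [key, det_mul, det_mul, mul_comm, ← mul_assoc, ← det_mul, hU2, det_one, one_mul,
    det_diagonal]
  calc (1:ℝ) = ∏ _i : m, 1 := by simp
  _ ≤ ∏ i, (1 + hH.eigenvalues i) :=
    Finset.prod_le_prod (fun i _ => zero_le_one) (fun i _ => by linarith [hQ.eigenvalues_nonneg i])

theorem det_le_det_add {P N : Matrix m m ℝ} (hP : P.PosSemidef) (hN : N.PosSemidef) :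
    P.det ≤ (P + N).det := by
  by_cases hd : P.det = 0
  · rw [hd]; exact psd_det_nonneg (hP.add hN)
  · have hC : (CFC.sqrt P).PosSemidef := (CFC.sqrt_nonneg P).posSemidef
    set C := CFC.sqrt P with hCdef
    have hC2 : C * C = P := by rw [← pow_two]; exact CFC.sq_sqrt P hP.nonneg
    have hCd : C.det ≠ 0 := fun h0 => hd (by rw [← hC2, det_mul, h0, zero_mul])
    haveI : Invertible C := invertibleOfIsUnitDet C hCd.isUnit
    have hCi : C⁻¹.IsHermitian := hC.1.inv
    have hQ : (C⁻¹ * N * C⁻¹).PosSemidef := by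
      have := hN.conjTranspose_mul_mul_same (B := C⁻¹)
      rwa [hCi.eq] at this
    have h1 : C * C⁻¹ = 1 := mul_inv_of_invertible C
    have h2 : C⁻¹ * C = 1 := inv_mul_of_invertible C
    have key : P + N = C * (1 + C⁻¹ * N * C⁻¹) * C := by
      rw [Matrix.mul_add, Matrix.mul_one, Matrix.add_mul, hC2]
      congr 1
      symm
      calc C * (C⁻¹ * N * C⁻¹) * C = C * C⁻¹ * N * (C⁻¹ * C) := by
            simp only [Matrix.mul_assoc]
        _ = N := by rw [h1, h2, Matrix.one_mul, Matrix.mul_one]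
    have hPC : C.det * C.det = P.det := by rw [← det_mul, hC2]
    have hone := one_le_det_one_add hQ
    have hPpos : 0 < P.det := lt_of_le_of_ne (psd_det_nonneg hP) (Ne.symm hd)
    rw [key, det_mul, det_mul]
    nlinarith [hone, hPC, hPpos]

/-! ### Block machinery -/

theorem inv_one_by_one (D : Matrix (Fin 1) (Fin 1) ℝ) (i j : Fin 1) :
    D⁻¹ i j = (D 0 0)⁻¹ := by
  rw [Matrix.inv_def, Matrix.adjugate_fin_one, Matrix.det_fin_one]
  simp [Subsingleton.elim i 0, Subsingleton.elim j 0]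

theorem rank1_entry {n : ℕ} (b : Matrix (Fin n) (Fin 1) ℝ) (d : Matrix (Fin 1) (Fin 1) ℝ)
    (i j : Fin n) : (b * d⁻¹ * bᴴ) i j = b i 0 * (d 0 0)⁻¹ * b j 0 := by
  simp [Matrix.mul_apply, Fin.sum_univ_one, inv_one_by_one, conjTranspose_apply]

theorem herm_fromBlocks {n₁ n₂ : Type*} {M : Matrix (n₁ ⊕ n₂) (n₁ ⊕ n₂) ℝ}
    (h : M.IsHermitian) :
    M = fromBlocks M.toBlocks₁₁ M.toBlocks₁₂ (M.toBlocks₁₂)ᴴ M.toBlocks₂₂ := by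
  have hblk : M.toBlocks₂₁ = (M.toBlocks₁₂)ᴴ := by
    ext i j
    simp only [toBlocks₂₁, toBlocks₁₂, conjTranspose_apply, of_apply, star_trivial]
    rw [← h.apply (Sum.inr i) (Sum.inl j), star_trivial]
  rw [← hblk]
  exact (fromBlocks_toBlocks M).symm

theorem fromBlocks_hadamard {n₁ n₂ : Type*}
    (A A' : Matrix n₁ n₁ ℝ) (B B' : Matrix n₁ n₂ ℝ) (C C' : Matrix n₂ n₁ ℝ)
    (D D' : Matrix n₂ n₂ ℝ) :
    (fromBlocks A B C D) ⊙ (fromBlocks A' B' C' D')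
      = fromBlocks (A ⊙ A') (B ⊙ B') (C ⊙ C') (D ⊙ D') := by
  ext (i | i) (j | j) <;> simp [hadamard_apply]

theorem schur_psd_det {n : ℕ} {M₁ : Matrix (Fin n) (Fin n) ℝ} {b : Matrix (Fin n) (Fin 1) ℝ}
    {d : Matrix (Fin 1) (Fin 1) ℝ} (h : (fromBlocks M₁ b bᴴ d).PosSemidef) (hd : 0 < d 0 0) :
    (M₁ - b * d⁻¹ * bᴴ).PosSemidef ∧
      (fromBlocks M₁ b bᴴ d).det = d 0 0 * (M₁ - b * d⁻¹ * bᴴ).det := by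
  have hdPD : d.PosDef := by
    have hdiag : d = diagonal (fun _ => d 0 0) := by
      ext i j
      fin_cases i <;> fin_cases j <;> simp
    rw [hdiag]
    exact posDef_diagonal_iff.mpr fun _ => hd
  haveI : Invertible d := invertibleOfIsUnitDet d (by rw [det_fin_one]; exact hd.ne'.isUnit)
  exact ⟨(PosDef.fromBlocks₂₂ _ _ hdPD).mp h, by rw [det_fromBlocks₂₂, det_fin_one, invOf_eq_nonsing_inv]⟩

/-- Hadamard's determinant inequality for real PSD matrices. -/
theorem det_le_prod_diag : ∀ {n : ℕ} (M : Matrix (Fin n) (Fin n) ℝ),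
    M.PosSemidef → M.det ≤ ∏ i, M i i := by
  intro n
  induction n with
  | zero => intro M _; simp [Matrix.det_fin_zero]
  | succ n IH =>
    intro M hM
    by_cases hd : M.det = 0
    · rw [hd]; exact Finset.prod_nonneg fun i _ => psd_diag_nonneg hM i
    have hPD := posDef_of_psd_det_ne_zero hM hd
    set e : Fin n ⊕ Fin 1 ≃ Fin (n + 1) := finSumFinEquiv with he
    set M' := M.submatrix e e with hM'
    have hM'psd : M'.PosSemidef := (posSemidef_submatrix_equiv e).mpr hM
    set M₁ := M'.toBlocks₁₁ with hM₁
    set b := M'.toBlocks₁₂ with hb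
    set dM := M'.toBlocks₂₂ with hdM
    have hblk : M' = fromBlocks M₁ b bᴴ dM := herm_fromBlocks hM'psd.1
    have hμ : 0 < dM 0 0 := pd_diag_pos hPD (e (Sum.inr 0))
    obtain ⟨hSM, hdet⟩ := schur_psd_det (hblk ▸ hM'psd) hμ
    set SM := M₁ - b * dM⁻¹ * bᴴ with hSM'
    have hdetM : M.det = dM 0 0 * SM.det := by
      rw [← det_submatrix_equiv_self e M, ← hM', hblk, hdet]
    have hIH := IH SM hSM
    have hdiag : ∏ i, SM i i ≤ ∏ i : Fin n, M₁ i i := by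
      refine Finset.prod_le_prod (fun i _ => psd_diag_nonneg hSM i) (fun i _ => ?_)
      have hentry : SM i i = M₁ i i - b i 0 * (dM 0 0)⁻¹ * b i 0 := by
        rw [hSM', Matrix.sub_apply, rank1_entry]
      rw [hentry]
      nlinarith [mul_self_nonneg (b i 0), inv_nonneg.mpr hμ.le]
    have hprod : ∏ i : Fin (n + 1), M i i = (∏ i : Fin n, M₁ i i) * dM 0 0 := by
      rw [← Fintype.prod_equiv e (fun p => M (e p) (e p)) (fun j => M j j) (fun p => rfl),
        Fintype.prod_sum_type]
      simp only [Fin.prod_univ_one]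
      rfl
    rw [hdetM, hprod]
    calc dM 0 0 * SM.det ≤ dM 0 0 * ∏ i, SM i i :=
          mul_le_mul_of_nonneg_left hIH hμ.le
      _ ≤ dM 0 0 * ∏ i : Fin n, M₁ i i := mul_le_mul_of_nonneg_left hdiag hμ.le
      _ = (∏ i : Fin n, M₁ i i) * dM 0 0 := by ring

/-- Oppenheim's inequality (lower bound). -/
theorem oppenheim_lower : ∀ {n : ℕ} (A X : Matrix (Fin n) (Fin n) ℝ),
    A.PosSemidef → X.PosSemidef → (∏ i, A i i) * X.det ≤ (A ⊙ X).det := by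
  intro n
  induction n with
  | zero => intro A X _ _; simp [Matrix.det_fin_zero]
  | succ n IH =>
    intro A X hA hX
    have hAX : (A ⊙ X).PosSemidef := hadamard_posSemidef hA hX
    by_cases hdX : X.det = 0
    · rw [hdX, mul_zero]; exact psd_det_nonneg hAX
    by_cases hdA : ∃ i, A i i = 0
    · obtain ⟨i, hi⟩ := hdA
      rw [show (∏ i, A i i) = 0 from Finset.prod_eq_zero (Finset.mem_univ i) hi, zero_mul]
      exact psd_det_nonneg hAX
    push_neg at hdA
    have hAdiag : ∀ i, 0 < A i i := fun i =>
      lt_of_le_of_ne (psd_diag_nonneg hA i) (Ne.symm (hdA i))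
    have hXPD : X.PosDef := posDef_of_psd_det_ne_zero hX hdX
    set e : Fin n ⊕ Fin 1 ≃ Fin (n + 1) := finSumFinEquiv with he
    set A' := A.submatrix e e with hA'def
    set X' := X.submatrix e e with hX'def
    have hA'psd : A'.PosSemidef := (posSemidef_submatrix_equiv e).mpr hA
    have hX'psd : X'.PosSemidef := (posSemidef_submatrix_equiv e).mpr hX
    set A₁ := A'.toBlocks₁₁ with hA₁
    set a := A'.toBlocks₁₂ with ha
    set dA := A'.toBlocks₂₂ with hdA'
    set X₁ := X'.toBlocks₁₁ with hX₁
    set x := X'.toBlocks₁₂ with hx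
    set dX := X'.toBlocks₂₂ with hdX'
    have hAblk : A' = fromBlocks A₁ a aᴴ dA := herm_fromBlocks hA'psd.1
    have hXblk : X' = fromBlocks X₁ x xᴴ dX := herm_fromBlocks hX'psd.1
    have hα : 0 < dA 0 0 := hAdiag (e (Sum.inr 0))
    have hξ : 0 < dX 0 0 := pd_diag_pos hXPD (e (Sum.inr 0))
    obtain ⟨hSA, _⟩ := schur_psd_det (hAblk ▸ hA'psd) hα
    obtain ⟨hSX, hdetXblk⟩ := schur_psd_det (hXblk ▸ hX'psd) hξ
    set SA := A₁ - a * dA⁻¹ * aᴴ with hSAdef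
    set SX := X₁ - x * dX⁻¹ * xᴴ with hSXdef
    set R := x * dX⁻¹ * xᴴ with hRdef
    have hRpsd : R.PosSemidef := by
      have hdXpsd : dX.PosSemidef := hX'psd.submatrix Sum.inr
      exact (hdXpsd.inv).mul_mul_conjTranspose_same x
    have hA₁psd : A₁.PosSemidef := hA'psd.submatrix Sum.inl
    have hHblk : (A ⊙ X).submatrix e e
        = fromBlocks (A₁ ⊙ X₁) (a ⊙ x) ((a ⊙ x)ᴴ) (dA ⊙ dX) := by
      have h0 : (A ⊙ X).submatrix e e = A' ⊙ X' := rfl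
      have h1 : (a ⊙ x)ᴴ = aᴴ ⊙ xᴴ := by
        ext i j
        simp [conjTranspose_apply]
      rw [h0, hAblk, hXblk, fromBlocks_hadamard, h1]
    have hαξ : 0 < (dA ⊙ dX) 0 0 := by
      simpa [hadamard_apply] using mul_pos hα hξ
    have hAXblkpsd : (fromBlocks (A₁ ⊙ X₁) (a ⊙ x) ((a ⊙ x)ᴴ) (dA ⊙ dX)).PosSemidef := by
      rw [← hHblk]; exact (posSemidef_submatrix_equiv e).mpr hAX
    obtain ⟨_, hdetAXblk⟩ := schur_psd_det hAXblkpsd hαξ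
    have key : (A₁ ⊙ X₁) - (a ⊙ x) * (dA ⊙ dX)⁻¹ * (a ⊙ x)ᴴ = A₁ ⊙ SX + SA ⊙ R := by
      ext i j
      simp only [Matrix.sub_apply, Matrix.add_apply, hadamard_apply, rank1_entry, hSXdef, hSAdef, hRdef]
      rw [mul_inv]
      ring
    have hstep1 : (A₁ ⊙ SX).det
        ≤ ((A₁ ⊙ X₁) - (a ⊙ x) * (dA ⊙ dX)⁻¹ * (a ⊙ x)ᴴ).det := by
      rw [key]
      exact det_le_det_add (hadamard_posSemidef hA₁psd hSX) (hadamard_posSemidef hSA hRpsd)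
    have hIH := IH A₁ SX hA₁psd hSX
    have hprodA : ∏ i : Fin (n + 1), A i i = (∏ i : Fin n, A₁ i i) * dA 0 0 := by
      rw [← Fintype.prod_equiv e (fun p => A (e p) (e p)) (fun j => A j j) (fun p => rfl),
        Fintype.prod_sum_type]
      simp only [Fin.prod_univ_one]
      rfl
    have hXdet : X.det = dX 0 0 * SX.det := by
      rw [← det_submatrix_equiv_self e X, ← hX'def, hXblk, hdetXblk]
    have hAXdet : (A ⊙ X).det
        = (dA 0 0 * dX 0 0) * ((A₁ ⊙ X₁) - (a ⊙ x) * (dA ⊙ dX)⁻¹ * (a ⊙ x)ᴴ).det := by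
      rw [← det_submatrix_equiv_self e (A ⊙ X), hHblk, hdetAXblk]
      congr 1
    calc (∏ i, A i i) * X.det = ((∏ i : Fin n, A₁ i i) * dA 0 0) * (dX 0 0 * SX.det) := by
          rw [hprodA, hXdet]
      _ = (dA 0 0 * dX 0 0) * ((∏ i : Fin n, A₁ i i) * SX.det) := by ring
      _ ≤ (dA 0 0 * dX 0 0) * (A₁ ⊙ SX).det :=
          mul_le_mul_of_nonneg_left hIH (by positivity)
      _ ≤ (dA 0 0 * dX 0 0) * ((A₁ ⊙ X₁) - (a ⊙ x) * (dA ⊙ dX)⁻¹ * (a ⊙ x)ᴴ).det :=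
          mul_le_mul_of_nonneg_left hstep1 (by positivity)
      _ = (A ⊙ X).det := hAXdet.symm

end OppenheimAux

/-- Oppenheim inequality: for real symmetric positive semidefinite `A` and `X`,
`(∏ i, a i i) * det X ≤ det (A ⊙ X) ≤ (∏ i, a i i) * (∏ i, x i i)`. -/
theorem oppenheim_inequality {n : ℕ} (A X : Matrix (Fin n) (Fin n) ℝ)
    (hA : A.PosSemidef) (hX : X.PosSemidef) :
    (∏ i, A i i) * X.det ≤ (A ⊙ X).det ∧
      (A ⊙ X).det ≤ (∏ i, A i i) * ∏ i, X i i := by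
  refine ⟨OppenheimAux.oppenheim_lower A X hA hX, ?_⟩
  have h := OppenheimAux.det_le_prod_diag (A ⊙ X) (OppenheimAux.hadamard_posSemidef hA hX)
  calc (A ⊙ X).det ≤ ∏ i, (A ⊙ X) i i := h
    _ = (∏ i, A i i) * ∏ i, X i i := by
      simp only [hadamard_apply]
      rw [Finset.prod_mul_distrib]
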